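/- arXiv:1406.4329 — 2 statements merged into one kernel-verified Lean document; each statement's English description precedes it below -/
import Mathlib

section
/- Let (Eₙ)_{n≥1} be a sequence of events on a probability space with complements Ēₙ, and suppose ∑_{n≥1} P(Eₙ | Ē₁ ∩ ... ∩ Ē_{n−1}) = ∞ (with the conditional probability interpreted as 1 if P(Ē₁ ∩ ... ∩ Ē_{n−1}) = 0). Then P(⋃ₙ Eₙ) = 1. -/
open MeasureTheory Filter ENNReal

theorem stmt_3 {Ω : Type*} [MeasurableSpace Ω] (P : Measure Ω) [IsProbabilityMeasure P]
    (E : ℕ → Set Ω) (hE : ∀ n, MeasurableSet (E n))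
    (hdiv : ∑' n : ℕ,
        (if P (⋂ i < n, (E i)ᶜ) = 0 then 1
         else P (E n ∩ ⋂ i < n, (E i)ᶜ) / P (⋂ i < n, (E i)ᶜ)) = ⊤) :
    P (⋃ n, E n) = 1 := by
  classical
  set A : ℕ → Set Ω := fun n => ⋂ i < n, (E i)ᶜ with hA
  have hAsub : ∀ n, (⋃ m, E m)ᶜ ⊆ A n := by
    intro n x hx
    simp only [Set.compl_iUnion, Set.mem_iInter] at hx
    simp only [hA, Set.mem_iInter]
    exact fun i _ => hx i
  have hAnt : ∀ {n m : ℕ}, n ≤ m → A m ⊆ A n := by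
    intro n m hnm x hx
    simp only [hA, Set.mem_iInter] at hx ⊢
    exact fun i hi => hx i (lt_of_lt_of_le hi hnm)
  have hfin : ∀ s : Set Ω, P s ≠ ⊤ := fun s => measure_ne_top P s
  have htend : Tendsto (fun N => P (A N)) atTop (nhds 0) := by
    by_cases hz : ∃ n, P (A n) = 0
    · obtain ⟨n, hn⟩ := hz
      have : ∀ᶠ m in atTop, (0 : ℝ≥0∞) = P (A m) := by
        filter_upwards [eventually_ge_atTop n] with m hm
        exact le_antisymm zero_le (hn ▸ measure_mono (hAnt hm))
      exact tendsto_const_nhds.congr' this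
    · push_neg at hz
      -- rewrite hdiv
      have hdiv' : ∑' n, P (E n ∩ A n) / P (A n) = ⊤ := by
        rw [← hdiv]
        exact tsum_congr fun n => (if_neg (hz n)).symm
      set a : ℕ → ℝ := fun n => (P (A n)).toReal with ha
      set b : ℕ → ℝ := fun n => (P (E n ∩ A n)).toReal with hb
      set p : ℕ → ℝ := fun n => b n / a n with hp
      have hapos : ∀ n, 0 < a n := fun n => ENNReal.toReal_pos (hz n) (hfin _)
      have hba : ∀ n, b n ≤ a n := fun n =>
        ENNReal.toReal_mono (hfin _) (measure_mono Set.inter_subset_right)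
      have hbnn : ∀ n, 0 ≤ b n := fun n => ENNReal.toReal_nonneg
      have hp1 : ∀ n, p n ≤ 1 := fun n => (div_le_one (hapos n)).2 (hba n)
      have hpnn : ∀ n, 0 ≤ p n := fun n => div_nonneg (hbnn n) (hapos n).le
      -- recursion
      have hAsucc : ∀ n, A (n + 1) = A n ∩ (E n)ᶜ := by
        intro n
        simp only [hA]
        ext x
        simp [Nat.lt_succ_iff_lt_or_eq]
        constructor
        · intro h; exact ⟨fun i hi => h i hi.le, h n le_rfl⟩
        · rintro ⟨h1, h2⟩ i hi; rcases Nat.lt_or_eq_of_le hi with hi | rfl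
          · exact h1 i hi
          · exact h2
      have hrec : ∀ n, a (n + 1) = a n - b n := by
        intro n
        have h1 : P (E n ∩ A n) + P (A (n + 1)) = P (A n) := by
          rw [hAsucc, Set.inter_comm (E n) (A n), ← Set.diff_eq]
          exact measure_inter_add_diff (A n) (hE n)
        have h2 : b n + a (n + 1) = a n := by
          rw [ha, hb, ← ENNReal.toReal_add (hfin _) (hfin _), h1]
        linarith
      -- key bound
      have hkey : ∀ N, a N ≤ Real.exp (-(∑ n ∈ Finset.range N, p n)) := by
        intro N
        induction N with
        | zero =>
          simp only [Finset.range_zero, Finset.sum_empty, neg_zero, Real.exp_zero]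
          have : A 0 = Set.univ := by simp [hA]
          simp [ha, this]
        | succ N ih =>
          have h1 : a (N + 1) = a N * (1 - p N) := by
            rw [hrec, hp, mul_sub, mul_one, mul_div_cancel₀ _ (hapos N).ne']
          have h2 : (1 : ℝ) - p N ≤ Real.exp (-(p N)) := by
            have := Real.add_one_le_exp (-(p N)); linarith
          calc a (N + 1) = a N * (1 - p N) := h1
            _ ≤ Real.exp (-(∑ n ∈ Finset.range N, p n)) * Real.exp (-(p N)) := by
                apply mul_le_mul ih h2 (by linarith [hp1 N]) (Real.exp_nonneg _)
            _ = Real.exp (-(∑ n ∈ Finset.range (N + 1), p n)) := by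
                rw [← Real.exp_add, Finset.sum_range_succ, neg_add]
      -- partial sums diverge
      have hq1 : ∀ n, P (E n ∩ A n) / P (A n) ≤ 1 := by
        intro n
        calc P (E n ∩ A n) / P (A n) ≤ P (A n) / P (A n) :=
              ENNReal.div_le_div_right (measure_mono Set.inter_subset_right) _
          _ = 1 := ENNReal.div_self (hz n) (hfin _)
      have hqne : ∀ n, P (E n ∩ A n) / P (A n) ≠ ⊤ := fun n =>
        ne_top_of_le_ne_top (by simp) (hq1 n)
      have hptoReal : ∀ n, p n = (P (E n ∩ A n) / P (A n)).toReal := by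
        intro n; rw [hp, hb, ha, ENNReal.toReal_div]
      have hS : Tendsto (fun N => ∑ n ∈ Finset.range N, p n) atTop atTop := by
        have h1 : Tendsto (fun N => ∑ n ∈ Finset.range N, P (E n ∩ A n) / P (A n))
            atTop (nhds ⊤) := by
          rw [← hdiv']
          exact ENNReal.tendsto_nat_tsum _
        rw [ENNReal.tendsto_nhds_top_iff_nat] at h1
        rw [tendsto_atTop]
        intro M
        obtain ⟨m, hm⟩ := exists_nat_ge M
        filter_upwards [h1 m] with N hN
        have hsne : (∑ n ∈ Finset.range N, P (E n ∩ A n) / P (A n)) ≠ ⊤ :=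
          ENNReal.sum_ne_top.2 fun n _ => hqne n
        have : (m : ℝ) ≤ (∑ n ∈ Finset.range N, P (E n ∩ A n) / P (A n)).toReal := by
          have := ENNReal.toReal_mono hsne hN.le
          simpa using this
        rw [ENNReal.toReal_sum (fun n _ => hqne n)] at this
        calc M ≤ (m : ℝ) := hm
          _ ≤ _ := by rw [Finset.sum_congr rfl fun n _ => hptoReal n]; exact this
      -- squeeze
      have haten : Tendsto a atTop (nhds 0) := by
        apply squeeze_zero (fun N => ENNReal.toReal_nonneg) hkey
        exact Real.tendsto_exp_atBot.comp (tendsto_neg_atTop_atBot.comp hS)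
      have : Tendsto (fun N => ENNReal.ofReal (a N)) atTop (nhds 0) := by
        have := ENNReal.tendsto_ofReal haten
        simpa using this
      refine this.congr fun N => ?_
      rw [ha, ENNReal.ofReal_toReal (hfin _)]
  have hc : P ((⋃ n, E n)ᶜ) = 0 :=
    le_antisymm (ge_of_tendsto' htend fun N => measure_mono (hAsub N)) zero_le
  exact (prob_compl_eq_zero_iff (MeasurableSet.iUnion hE)).1 hc
end

section
/- Let k̄ be an ℕ-valued random variable and (z_n) a nondecreasing sequence of nonnegative random variables, and suppose there are constants q ∈ (0,1), γ > 0, K₁, K₂ ≥ 1, v ≥ 0 with P(k̄ > k) ≤ q^k and E[e^{γ z_k}] ≤ K₁^k K₂^{k}(1 + v) for all k. If α ∈ (0, γ) satisfies q^{1 − α/γ} (K₁ K₂)^{α/γ} < 1, then E[e^{α z_{k̄}}] ≤ C₃ (1 + v) for some constant C₃ depending only on q, γ, α, K₁, K₂. (The key estimate is E[e^{α z_{k̄}} 1_{k̄ = k}] ≤ P(k̄ > k−1)^{1 − α/γ} (E[e^{γ z_k}])^{α/γ} by Hölder's inequality, summable by the assumed inequality.) -/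
open MeasureTheory

private lemma log_inj_aux {x y : ℝ} (hx : 0 < x) (hy : 0 < y)
    (h : Real.log x = Real.log y) : x = y := by
  rw [← Real.exp_log hx, ← Real.exp_log hy, h]

private lemma young_aux {θ b x : ℝ} (hθ0 : 0 < θ) (hθ1 : θ < 1) (hb : 0 < b) (hx : 0 ≤ x) :
    x ^ θ ≤ θ * (b ^ (1 - θ) * x) + (1 - θ) * b ^ (-θ) := by
  have key : x ^ θ = (b ^ (1 - θ) * x) ^ θ * (b ^ (-θ)) ^ (1 - θ) := by
    rw [Real.mul_rpow (Real.rpow_nonneg hb.le _) hx, ← Real.rpow_mul hb.le,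
      ← Real.rpow_mul hb.le, mul_right_comm, ← Real.rpow_add hb]
    have h0 : (1 - θ) * θ + -θ * (1 - θ) = 0 := by ring
    rw [h0, Real.rpow_zero, one_mul]
  rw [key]
  exact Real.geom_mean_le_arith_mean2_weighted hθ0.le (by linarith)
    (mul_nonneg (Real.rpow_nonneg hb.le _) hx) (Real.rpow_nonneg hb.le _) (by ring)

private lemma htA_aux {q M : ℝ} (hq : 0 < q) (hM : 0 < M) (θ : ℝ) (k : ℕ) :
    (q ^ k / (q * M ^ k)) ^ (1 - θ) * M ^ k
      = q ^ (θ - 1) * (q ^ (1 - θ) * M ^ θ) ^ k := by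
  have hb : 0 < q ^ k / (q * M ^ k) := by positivity
  apply log_inj_aux (by positivity) (by positivity)
  rw [Real.log_mul (Real.rpow_pos_of_pos hb _).ne' (by positivity),
    Real.log_mul (by positivity) (by positivity),
    Real.log_rpow hb, Real.log_rpow hq,
    Real.log_div (by positivity) (by positivity),
    Real.log_mul (ne_of_gt hq) (by positivity),
    Real.log_pow, Real.log_pow, Real.log_pow,
    Real.log_mul (by positivity) (by positivity),
    Real.log_rpow hq, Real.log_rpow hM]
  ring

private lemma hcb_aux {q M : ℝ} (hq : 0 < q) (hM : 0 < M) (θ : ℝ) (k : ℕ) :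
    (q ^ k / (q * M ^ k)) ^ (-θ) * (q ^ k / q)
      = (q ^ k / (q * M ^ k)) ^ (1 - θ) * M ^ k := by
  have hb : 0 < q ^ k / (q * M ^ k) := by positivity
  have h1 : q ^ k / q = (q ^ k / (q * M ^ k)) * M ^ k := by
    field_simp
  rw [h1, ← mul_assoc]
  congr 1
  have h2 : (1 : ℝ) - θ = -θ + 1 := by ring
  rw [h2, Real.rpow_add hb, Real.rpow_one]

theorem stmt_10 (q γ α K₁ K₂ : ℝ) (hq0 : 0 < q) (hq1 : q < 1) (hγ : 0 < γ)
    (hα0 : 0 < α) (hαγ : α < γ) (hK₁ : 1 ≤ K₁) (hK₂ : 1 ≤ K₂)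
    (hgeom : q ^ (1 - α/γ) * (K₁ * K₂) ^ (α/γ) < 1) :
    ∃ C₃ : ℝ, 0 < C₃ ∧
      ∀ (Ω : Type) (m : MeasurableSpace Ω) (P : Measure Ω), IsProbabilityMeasure P →
      ∀ (kbar : Ω → ℕ) (z : ℕ → Ω → ℝ) (v : ℝ), 0 ≤ v →
        Measurable kbar → (∀ k, Measurable (z k)) →
        (∀ ω, Monotone fun k => z k ω) → (∀ k ω, 0 ≤ z k ω) →
        (∀ k : ℕ, (P {ω | k < kbar ω}).toReal ≤ q ^ k) →
        (∀ k, Integrable (fun ω => Real.exp (γ * z k ω)) P) →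
        (∀ k : ℕ, ∫ ω, Real.exp (γ * z k ω) ∂P ≤ K₁ ^ k * K₂ ^ k * (1 + v)) →
        ∫ ω, Real.exp (α * z (kbar ω) ω) ∂P ≤ C₃ * (1 + v) := by
  set θ : ℝ := α / γ with hθdef
  have hθ0 : 0 < θ := div_pos hα0 hγ
  have hθ1 : θ < 1 := (div_lt_one hγ).mpr hαγ
  have hθ1' : (0:ℝ) ≤ 1 - θ := by linarith
  have hK10 : 0 < K₁ := lt_of_lt_of_le one_pos hK₁
  have hK20 : 0 < K₂ := lt_of_lt_of_le one_pos hK₂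
  have hKK : 0 < K₁ * K₂ := mul_pos hK10 hK20
  set r : ℝ := q ^ (1 - θ) * (K₁ * K₂) ^ θ with hrdef
  have hr0 : 0 < r := mul_pos (Real.rpow_pos_of_pos hq0 _) (Real.rpow_pos_of_pos hKK _)
  have hr1 : r < 1 := hgeom
  have h1r : 0 < 1 - r := by linarith
  have hC0 : 0 < q ^ (θ - 1) * (1 - r)⁻¹ :=
    mul_pos (Real.rpow_pos_of_pos hq0 _) (inv_pos.mpr h1r)
  refine ⟨q ^ (θ - 1) * (1 - r)⁻¹, hC0, ?_⟩
  intro Ω m P hP kbar z v hv hkbar hz hmono hz0 hq hint hbound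
  set b : ℕ → ℝ := fun k => q ^ k / (q * (K₁ * K₂) ^ k) with hbdef
  have hb : ∀ k, 0 < b k := fun k => by positivity
  set t : ℕ → ℝ := fun k => (b k) ^ (1 - θ) with htdef
  set c : ℕ → ℝ := fun k => (b k) ^ (-θ) with hcdef
  have ht0 : ∀ k, 0 < t k := fun k => Real.rpow_pos_of_pos (hb k) _
  have hc0 : ∀ k, 0 < c k := fun k => Real.rpow_pos_of_pos (hb k) _
  have htA : ∀ k : ℕ, t k * (K₁ * K₂) ^ k = q ^ (θ - 1) * r ^ k := fun k =>
    htA_aux hq0 hKK θ k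
  have hcb : ∀ k : ℕ, c k * (q ^ k / q) = t k * (K₁ * K₂) ^ k := fun k =>
    hcb_aux hq0 hKK θ k
  -- pointwise Young inequality
  have hyoung : ∀ (k : ℕ) (w : ℝ), Real.exp (α * w) ≤
      θ * (t k * Real.exp (γ * w)) + (1 - θ) * c k := by
    intro k w
    have hx : Real.exp (α * w) = (Real.exp (γ * w)) ^ θ := by
      rw [← Real.exp_mul]
      congr 1
      field_simp [hθdef]
      rw [hθdef]; field_simp
    rw [hx]
    exact young_aux hθ0 hθ1 (hb k) (Real.exp_pos _).le
  -- measure of the slices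
  have hPk : ∀ k : ℕ, P {ω | kbar ω = k} ≤ ENNReal.ofReal (q ^ k / q) := by
    intro k
    cases k with
    | zero =>
      calc P {ω | kbar ω = 0} ≤ 1 := prob_le_one
      _ ≤ ENNReal.ofReal (q ^ 0 / q) := by
          rw [← ENNReal.ofReal_one]
          apply ENNReal.ofReal_le_ofReal
          rw [pow_zero, le_div_iff₀ hq0]
          linarith
    | succ k =>
      have hsub : {ω | kbar ω = k + 1} ⊆ {ω | k < kbar ω} := by
        intro ω hω; simp only [Set.mem_setOf_eq] at *; omega
      calc P {ω | kbar ω = k + 1} ≤ P {ω | k < kbar ω} := measure_mono hsub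
      _ ≤ ENNReal.ofReal (q ^ k) := by
          rw [ENNReal.le_ofReal_iff_toReal_le (measure_ne_top _ _) (by positivity)]
          exact hq k
      _ = ENNReal.ofReal (q ^ (k + 1) / q) := by
          congr 1
          field_simp [pow_succ]
          ring
  -- the slice functions
  set S : ℕ → Ω → ENNReal := fun k =>
    Set.indicator {ω | kbar ω = k} (fun ω => ENNReal.ofReal (Real.exp (α * z k ω))) with hSdef
  have hSet : ∀ k : ℕ, MeasurableSet {ω | kbar ω = k} := fun k =>
    hkbar (measurableSet_singleton k)
  have hSmeas : ∀ k, Measurable (S k) := fun k =>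
    (((hz k).const_mul α).exp.ennreal_ofReal).indicator (hSet k)
  have hFeq : ∀ ω, (∑' k, S k ω) = ENNReal.ofReal (Real.exp (α * z (kbar ω) ω)) := by
    intro ω
    rw [tsum_eq_single (kbar ω)]
    · rw [hSdef]; simp only
      rw [Set.indicator_of_mem (by simp)]
    · intro k hk
      rw [hSdef]; simp only
      rw [Set.indicator_of_notMem]
      simp only [Set.mem_setOf_eq]
      exact fun h => hk h.symm
  have hFmeas : Measurable (fun ω => ∑' k, S k ω) := Measurable.ennreal_tsum hSmeas
  have hfmeas : Measurable (fun ω => Real.exp (α * z (kbar ω) ω)) := by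
    have heq : (fun ω => Real.exp (α * z (kbar ω) ω)) = fun ω => (∑' k, S k ω).toReal := by
      funext ω
      rw [hFeq ω, ENNReal.toReal_ofReal (Real.exp_pos _).le]
    rw [heq]
    exact hFmeas.ennreal_toReal
  -- per-slice lintegral bound
  have hslice : ∀ k : ℕ, ∫⁻ ω, S k ω ∂P ≤
      ENNReal.ofReal (q ^ (θ - 1) * (1 + v) * r ^ k) := by
    intro k
    have hnn1 : 0 ≤ (1 - θ) * c k := mul_nonneg hθ1' (hc0 k).le
    have hptwise : ∀ ω, S k ω ≤
        ENNReal.ofReal (θ * (t k * Real.exp (γ * z k ω))) +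
        Set.indicator {ω | kbar ω = k} (fun _ => ENNReal.ofReal ((1 - θ) * c k)) ω := by
      intro ω
      by_cases hω : ω ∈ {ω | kbar ω = k}
      · rw [hSdef]; simp only
        rw [Set.indicator_of_mem hω, Set.indicator_of_mem hω, ← ENNReal.ofReal_add
          (by positivity) hnn1]
        exact ENNReal.ofReal_le_ofReal (hyoung k (z k ω))
      · rw [hSdef]; simp only
        rw [Set.indicator_of_notMem hω]
        exact zero_le
    have hgmeas : Measurable fun ω => ENNReal.ofReal (θ * (t k * Real.exp (γ * z k ω))) :=
      ((((hz k).const_mul γ).exp.const_mul (t k)).const_mul θ).ennreal_ofReal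
    calc ∫⁻ ω, S k ω ∂P
        ≤ ∫⁻ ω, (ENNReal.ofReal (θ * (t k * Real.exp (γ * z k ω))) +
          Set.indicator {ω | kbar ω = k} (fun _ => ENNReal.ofReal ((1 - θ) * c k)) ω) ∂P :=
          lintegral_mono hptwise
      _ = (∫⁻ ω, ENNReal.ofReal (θ * (t k * Real.exp (γ * z k ω))) ∂P) +
          ENNReal.ofReal ((1 - θ) * c k) * P {ω | kbar ω = k} := by
          rw [lintegral_add_left hgmeas, lintegral_indicator_const (hSet k)]
      _ ≤ ENNReal.ofReal (θ * (t k * (K₁ ^ k * K₂ ^ k * (1 + v)))) +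
          ENNReal.ofReal ((1 - θ) * c k) * ENNReal.ofReal (q ^ k / q) := by
          gcongr
          · rw [← ofReal_integral_eq_lintegral_ofReal
              (((hint k).const_mul (t k)).const_mul θ)
              (Filter.Eventually.of_forall (fun ω => by positivity))]
            apply ENNReal.ofReal_le_ofReal
            rw [integral_const_mul, integral_const_mul]
            have hb1 := hbound k
            have h1 : 0 ≤ θ * t k := by positivity
            nlinarith [ht0 k]
          · exact hPk k
      _ ≤ ENNReal.ofReal (q ^ (θ - 1) * (1 + v) * r ^ k) := by
          rw [← ENNReal.ofReal_mul hnn1, ← ENNReal.ofReal_add (by positivity)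
            (mul_nonneg hnn1 (by positivity))]
          apply ENNReal.ofReal_le_ofReal
          have hA : K₁ ^ k * K₂ ^ k = (K₁ * K₂) ^ k := (mul_pow K₁ K₂ k).symm
          have h1 := htA k
          have h2 := hcb k
          have h3 : 0 < t k * (K₁ * K₂) ^ k := by positivity
          calc θ * (t k * (K₁ ^ k * K₂ ^ k * (1 + v))) + (1 - θ) * c k * (q ^ k / q)
              = θ * (t k * (K₁ * K₂) ^ k) * (1 + v) + (1 - θ) * (c k * (q ^ k / q)) := by
                rw [hA]; ring
            _ = θ * (t k * (K₁ * K₂) ^ k) * (1 + v) + (1 - θ) * (t k * (K₁ * K₂) ^ k) := by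
                rw [h2]
            _ ≤ θ * (t k * (K₁ * K₂) ^ k) * (1 + v) +
                (1 - θ) * (t k * (K₁ * K₂) ^ k * (1 + v)) := by
                nlinarith [mul_nonneg (mul_nonneg hθ1' h3.le) hv]
            _ = (t k * (K₁ * K₂) ^ k) * (1 + v) := by ring
            _ = q ^ (θ - 1) * (1 + v) * r ^ k := by rw [h1]; ring
  -- sum up
  have hsum : ∫⁻ ω, ENNReal.ofReal (Real.exp (α * z (kbar ω) ω)) ∂P ≤
      ENNReal.ofReal (q ^ (θ - 1) * (1 - r)⁻¹ * (1 + v)) := by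
    have h1 : ∫⁻ ω, ENNReal.ofReal (Real.exp (α * z (kbar ω) ω)) ∂P
        = ∑' k, ∫⁻ ω, S k ω ∂P := by
      rw [← lintegral_tsum (fun k => (hSmeas k).aemeasurable)]
      exact lintegral_congr fun ω => (hFeq ω).symm
    rw [h1]
    calc ∑' k, ∫⁻ ω, S k ω ∂P
        ≤ ∑' k : ℕ, ENNReal.ofReal (q ^ (θ - 1) * (1 + v) * r ^ k) :=
          ENNReal.tsum_le_tsum hslice
      _ = ENNReal.ofReal (∑' k : ℕ, q ^ (θ - 1) * (1 + v) * r ^ k) := by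
          rw [ENNReal.ofReal_tsum_of_nonneg (fun k => by positivity)
            ((summable_geometric_of_lt_one hr0.le hr1).mul_left _)]
      _ = ENNReal.ofReal (q ^ (θ - 1) * (1 - r)⁻¹ * (1 + v)) := by
          rw [tsum_mul_left, tsum_geometric_of_lt_one hr0.le hr1]
          congr 1
          ring
  -- conclude
  rw [integral_eq_lintegral_of_nonneg_ae
    (Filter.Eventually.of_forall fun ω => (Real.exp_pos _).le) hfmeas.aestronglyMeasurable]
  apply ENNReal.toReal_le_of_le_ofReal (by positivity)
  have : q ^ (θ - 1) * (1 - r)⁻¹ * (1 + v) = q ^ (θ - 1) * (1 - r)⁻¹ * (1 + v) := rfl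
  calc ∫⁻ ω, ENNReal.ofReal (Real.exp (α * z (kbar ω) ω)) ∂P
      ≤ ENNReal.ofReal (q ^ (θ - 1) * (1 - r)⁻¹ * (1 + v)) := hsum
    _ ≤ ENNReal.ofReal (q ^ (θ - 1) * (1 - r)⁻¹ * (1 + v)) := le_refl _
end
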